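/- Let $n \geq 1$, $x \in \mathbb{R}^n$, $r > 0$, let $D = \{ p \in \mathbb{R}^n : \|p - x\| < r \}$ be the open ball of radius $r$ centred at $x$, and define $\phi : \overline{D} \to \mathbb{R}$ by $\phi(p) = \cos\!\left( \frac{\pi \|p - x\|}{2r} \right)$. Then $\phi$ is $C^2$ on $\overline{D}$, $0 < \phi \leq 1$ on $D$, $\phi(x) = 1$, $\phi = 0$ on $\partial D$, and moreover $\|\nabla \phi\| \leq \frac{\pi}{2r}$ on $D$, $-\Delta \phi \leq \frac{\pi^2 n}{4 r^2}$ on $D$, and $\sup_{D} \left( 3 \|\nabla \phi\|^2 - \phi\, \Delta \phi \right) \leq \frac{\pi^2 (n+3)}{4 r^2}$. (Euclidean case of the paper's cut-off function lemma, where $L = \frac{1}{2}\Delta$ so $3|\nabla\phi|^2 - 2\phi L\phi = 3\|\nabla\phi\|^2 - \phi\Delta\phi$.) -/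

import Mathlib

open MeasureTheory Real



noncomputable def cutoffCoef (c : ℝ) (k : ℕ) : ℝ :=
  (-1)^k * c^(2*k) / (Nat.factorial (2*k))

noncomputable def cutoffG (c : ℝ) : ℝ → ℝ :=
  (FormalMultilinearSeries.ofScalars ℝ (cutoffCoef c)).sum

lemma cutoffG_radius (c : ℝ) :
    (FormalMultilinearSeries.ofScalars ℝ (cutoffCoef c)).radius = ⊤ := by
  apply FormalMultilinearSeries.radius_eq_top_of_summable_norm
  intro r
  refine Summable.of_nonneg_of_le (fun n => by positivity) (fun n => ?_)
    (Real.summable_pow_div_factorial (c^2 * r))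
  rw [FormalMultilinearSeries.ofScalars_norm]
  have h1 : ‖cutoffCoef c n‖ = (c^2)^n / (Nat.factorial (2*n)) := by
    rw [cutoffCoef, pow_mul]
    rw [Real.norm_eq_abs, abs_div, abs_mul, abs_pow, abs_neg, abs_one, one_pow, one_mul,
      abs_pow, abs_sq, Nat.abs_cast]
  rw [h1, mul_pow, div_mul_eq_mul_div]
  gcongr
  omega

lemma cutoffG_hasFPower (c : ℝ) :
    HasFPowerSeriesOnBall (cutoffG c)
      (FormalMultilinearSeries.ofScalars ℝ (cutoffCoef c)) 0 ⊤ := by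
  have h := FormalMultilinearSeries.hasFPowerSeriesOnBall
    (FormalMultilinearSeries.ofScalars ℝ (cutoffCoef c))
    (by rw [cutoffG_radius]; exact ENNReal.zero_lt_top)
  rw [cutoffG_radius] at h
  exact h

lemma cutoffG_analyticAt (c s : ℝ) : AnalyticAt ℝ (cutoffG c) s := by
  have := (cutoffG_hasFPower c).analyticOnNhd
  exact this s (by simp [edist_lt_top])

lemma cutoffG_contDiff (c : ℝ) : ContDiff ℝ ⊤ (cutoffG c) :=
  contDiff_iff_contDiffAt.2 fun s => (cutoffG_analyticAt c s).contDiffAt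

lemma cutoffG_sq (c t : ℝ) : cutoffG c (t^2) = Real.cos (c*t) := by
  rw [Real.cos_eq_tsum, cutoffG, FormalMultilinearSeries.sum]
  refine tsum_congr fun n => ?_
  rw [FormalMultilinearSeries.ofScalars_apply_eq, cutoffCoef, smul_eq_mul,
    ← pow_mul, mul_pow]
  ring


lemma cutoffG_diff (c : ℝ) : Differentiable ℝ (cutoffG c) :=
  (cutoffG_contDiff c).differentiable (by simp)

lemma cutoffG_contDiff_inf (c : ℝ) : ContDiff ℝ ((⊤:ℕ∞) : WithTop ℕ∞) (cutoffG c) :=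
  (cutoffG_contDiff c).of_le le_top

lemma cutoffG_deriv_diff (c : ℝ) : Differentiable ℝ (deriv (cutoffG c)) :=
  ((contDiff_infty_iff_deriv.mp (cutoffG_contDiff_inf c)).2).differentiable (by simp)

lemma cutoffG_deriv_id (c t : ℝ) :
    deriv (cutoffG c) (t^2) * (2*t) = -(Real.sin (c*t) * c) := by
  have hp : HasDerivAt (fun t : ℝ => t^2) (2*t) t := by
    simpa using hasDerivAt_pow 2 t
  have h1 : HasDerivAt (fun t : ℝ => cutoffG c (t^2))
      (deriv (cutoffG c) (t^2) * (2*t)) t :=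
    ((cutoffG_diff c (t^2)).hasDerivAt).comp t hp
  have h2 : HasDerivAt (fun t : ℝ => Real.cos (c*t)) (-(Real.sin (c*t) * c)) t := by
    have := (Real.hasDerivAt_cos (c*t)).comp t ((hasDerivAt_id t).const_mul c)
    simpa [mul_comm, Function.comp_def] using this
  have heq : (fun t : ℝ => cutoffG c (t^2)) = fun t : ℝ => Real.cos (c*t) :=
    funext fun t => cutoffG_sq c t
  rw [heq] at h1
  exact h1.unique h2

lemma cutoffG_deriv2_id (c t : ℝ) :
    4*t^2*(deriv (deriv (cutoffG c)) (t^2)) + 2 * deriv (cutoffG c) (t^2)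
      = -(c^2 * Real.cos (c*t)) := by
  have hp : HasDerivAt (fun t : ℝ => t^2) (2*t) t := by
    simpa using hasDerivAt_pow 2 t
  have ha : HasDerivAt (fun t : ℝ => deriv (cutoffG c) (t^2))
      (deriv (deriv (cutoffG c)) (t^2) * (2*t)) t :=
    HasDerivAt.comp (h₂ := deriv (cutoffG c)) t ((cutoffG_deriv_diff c (t^2)).hasDerivAt) hp
  have hb : HasDerivAt (fun t : ℝ => 2*t) 2 t := by
    simpa using (hasDerivAt_id t).const_mul 2
  have h1 := ha.mul hb
  have h2 : HasDerivAt (fun t : ℝ => -(Real.sin (c*t) * c))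
      (-(Real.cos (c*t) * c * c)) t := by
    have := (((Real.hasDerivAt_sin (c*t)).comp t
      ((hasDerivAt_id t).const_mul c)).mul_const c).neg
    simpa [mul_comm, mul_assoc, mul_left_comm, Pi.neg_def] using this
  have heq : (fun t : ℝ => deriv (cutoffG c) (t^2) * (2*t))
      = fun t : ℝ => -(Real.sin (c*t) * c) := funext fun t => cutoffG_deriv_id c t
  simp only [Pi.mul_def] at h1
  rw [heq] at h1
  have h3 := h1.unique h2
  linear_combination h3

lemma cutoffG_deriv_zero (c : ℝ) : deriv (cutoffG c) 0 = -(c^2/2) := by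
  have := cutoffG_deriv2_id c 0
  simp at this
  linarith

lemma cutoffG_deriv_bounds {c t : ℝ} (hc : 0 < c) (ht : 0 ≤ t) (hct : c * t ≤ π) :
    -(c^2) ≤ 2 * deriv (cutoffG c) (t^2) ∧ 2 * deriv (cutoffG c) (t^2) ≤ 0 := by
  rcases eq_or_lt_of_le ht with h | h
  · rw [← h]
    rw [show ((0:ℝ)^2) = 0 by norm_num, cutoffG_deriv_zero c]
    constructor <;> nlinarith [sq_nonneg c]
  · have hid := cutoffG_deriv_id c t
    have hs1 : 0 ≤ Real.sin (c*t) := Real.sin_nonneg_of_nonneg_of_le_pi (by positivity) hct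
    have hs2 : Real.sin (c*t) ≤ c*t := Real.sin_le (by positivity)
    constructor
    · nlinarith
    · nlinarith


/-- The Euclidean Laplacian: trace of the second Fréchet derivative. -/
noncomputable def laplacian {n : ℕ} (u : EuclideanSpace ℝ (Fin n) → ℝ)
    (x : EuclideanSpace ℝ (Fin n)) : ℝ :=
  ∑ i : Fin n, iteratedFDeriv ℝ 2 u x ![EuclideanSpace.single i 1, EuclideanSpace.single i 1]


set_option maxHeartbeats 1000000

/-- Euclidean cut-off function lemma: on the ball `D` of radius `r` centred at `x`,
the function `φ(p) = cos(π ‖p - x‖ / (2r))` is `C²` on `closure D`, satisfies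
`0 < φ ≤ 1` on `D`, `φ(x) = 1`, `φ = 0` on `∂D`, `‖∇φ‖ ≤ π/(2r)` on `D`,
`-Δφ ≤ π²n/(4r²)` on `D`, and `3‖∇φ‖² - φ Δφ ≤ π²(n+3)/(4r²)` on `D`. -/
theorem cutoff_function_lemma {n : ℕ} (hn : 1 ≤ n)
    (x : EuclideanSpace ℝ (Fin n)) (r : ℝ) (hr : 0 < r)
    (D : Set (EuclideanSpace ℝ (Fin n))) (hD : D = Metric.ball x r)
    (φ : EuclideanSpace ℝ (Fin n) → ℝ)
    (hφ : φ = fun p => Real.cos (π * dist p x / (2 * r))) :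
    ContDiffOn ℝ 2 φ (closure D) ∧
    (∀ p ∈ D, 0 < φ p ∧ φ p ≤ 1) ∧
    φ x = 1 ∧
    (∀ p ∈ frontier D, φ p = 0) ∧
    (∀ p ∈ D, ‖fderiv ℝ φ p‖ ≤ π / (2 * r)) ∧
    (∀ p ∈ D, -laplacian φ p ≤ π ^ 2 * n / (4 * r ^ 2)) ∧
    (∀ p ∈ D, 3 * ‖fderiv ℝ φ p‖ ^ 2 - φ p * laplacian φ p ≤
      π ^ 2 * (n + 3) / (4 * r ^ 2)) := by
  subst hD
  obtain ⟨c, hcdef⟩ : ∃ c : ℝ, c = π / (2*r) := ⟨_, rfl⟩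
  have hπ := Real.pi_pos
  have hc : 0 < c := by rw [hcdef]; positivity
  have hcr : c * r = π / 2 := by rw [hcdef]; field_simp
  have hc2 : c^2 = π^2/(4*r^2) := by rw [hcdef]; rw [div_pow]; ring_nf
  have hφval : ∀ p, φ p = Real.cos (c * ‖p - x‖) := fun p => by
    rw [hφ]
    show Real.cos _ = _
    rw [dist_eq_norm]
    congr 1
    rw [hcdef]; ring
  have hφg : φ = fun p => cutoffG c (‖p - x‖^2) := funext fun p => by
    rw [hφval p, ← cutoffG_sq c ‖p - x‖]
  -- smoothness
  have hφC2 : ContDiff ℝ 2 φ := by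
    rw [hφg]
    exact ((cutoffG_contDiff c).of_le le_top).comp
      ((contDiff_norm_sq ℝ).comp (contDiff_id.sub contDiff_const))
  have hφCi : ContDiff ℝ ((⊤:ℕ∞) : WithTop ℕ∞) φ := by
    rw [hφg]
    exact (cutoffG_contDiff_inf c).comp
      ((contDiff_norm_sq ℝ).comp (contDiff_id.sub contDiff_const))
  have hdφdiff : Differentiable ℝ (fderiv ℝ φ) :=
    (hφCi.fderiv_right (m := 1) (by exact WithTop.coe_le_coe.mpr le_top)).differentiable (by simp)
  -- derivative of squared norm
  have hq : ∀ p : EuclideanSpace ℝ (Fin n),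
      HasFDerivAt (fun p : EuclideanSpace ℝ (Fin n) => ‖p - x‖^2)
        (2 • (innerSL ℝ (p - x))) p := by
    intro p
    simpa using ((hasFDerivAt_id p).sub_const x).norm_sq
  -- first derivative of φ
  have hA : ∀ p : EuclideanSpace ℝ (Fin n),
      HasFDerivAt φ ((2 * deriv (cutoffG c) (‖p - x‖^2)) • innerSL ℝ (p - x)) p := by
    intro p
    rw [hφg]
    have h := HasDerivAt.comp_hasFDerivAt p
      ((cutoffG_diff c (‖p - x‖^2)).hasDerivAt) (hq p)
    have h2 : (deriv (cutoffG c) (‖p - x‖^2)) • ((2:ℕ) • (innerSL ℝ (p - x)))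
        = (2 * deriv (cutoffG c) (‖p - x‖^2)) • innerSL ℝ (p - x) := by
      ext y
      simp only [ContinuousLinearMap.smul_apply, smul_eq_mul]
      ring
    rw [← h2]
    exact h
  have hfd : ∀ p, fderiv ℝ φ p
      = (2 * deriv (cutoffG c) (‖p - x‖^2)) • innerSL ℝ (p - x) :=
    fun p => (hA p).fderiv
  have hnorm : ∀ p, ‖fderiv ℝ φ p‖
      = |2 * deriv (cutoffG c) (‖p - x‖^2)| * ‖p - x‖ := fun p => by
    rw [hfd p, norm_smul, innerSL_apply_norm, Real.norm_eq_abs]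
  -- second derivative entries
  have hsecond : ∀ p (i : Fin n),
      iteratedFDeriv ℝ 2 φ p ![EuclideanSpace.single i 1, EuclideanSpace.single i 1]
        = 2 * deriv (cutoffG c) (‖p - x‖^2)
          + 4 * deriv (deriv (cutoffG c)) (‖p - x‖^2) * ((p - x) i)^2 := by
    intro p i
    set e : EuclideanSpace ℝ (Fin n) := EuclideanSpace.single i 1 with he
    have h1 : iteratedFDeriv ℝ 2 φ p ![e, e] = fderiv ℝ (fderiv ℝ φ) p e e := by
      rw [iteratedFDeriv_two_apply]
      norm_num
    have h2 : fderiv ℝ (fun y => fderiv ℝ φ y e) p = (fderiv ℝ (fderiv ℝ φ) p).flip e := by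
      rw [fderiv_clm_apply (hdφdiff p) (differentiableAt_const e)]
      simp
    -- the scalar function
    have hsc : (fun y => fderiv ℝ φ y e)
        = fun y => (2 * deriv (cutoffG c) (‖y - x‖^2)) * (inner ℝ (y - x) e : ℝ) := by
      funext y
      rw [hfd y]
      simp only [ContinuousLinearMap.smul_apply, innerSL_apply_apply, smul_eq_mul]
    have ha : HasFDerivAt
        (fun y : EuclideanSpace ℝ (Fin n) => 2 * deriv (cutoffG c) (‖y - x‖^2))
        ((2:ℝ) • ((deriv (deriv (cutoffG c)) (‖p - x‖^2)) • ((2:ℕ) • innerSL ℝ (p - x)))) p :=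
      (HasDerivAt.comp_hasFDerivAt (h₂ := deriv (cutoffG c)) p
        ((cutoffG_deriv_diff c (‖p - x‖^2)).hasDerivAt) (hq p)).const_mul 2
    have hb : HasFDerivAt
        (fun y : EuclideanSpace ℝ (Fin n) => (inner ℝ (y - x) e : ℝ))
        (innerSL ℝ e) p := by
      have hb' := (innerSL ℝ e).hasFDerivAt.comp p ((hasFDerivAt_id p).sub_const x)
      simp only [ContinuousLinearMap.comp_id] at hb'
      exact hb'.congr_of_eventuallyEq (Filter.Eventually.of_forall fun y => by
        simp only [Function.comp_apply, innerSL_apply_apply, id_eq]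
        exact real_inner_comm _ _)
    have hab := ha.mul hb
    have hval : fderiv ℝ (fun y => fderiv ℝ φ y e) p
        = ((2 * deriv (cutoffG c) (‖p - x‖^2)) • (innerSL ℝ e)
          + (inner ℝ (p - x) e : ℝ) • ((2:ℝ) • ((deriv (deriv (cutoffG c)) (‖p - x‖^2)) • ((2:ℕ) • innerSL ℝ (p - x))))) := by
      rw [hsc]
      exact hab.fderiv
    have hee : (inner ℝ e e : ℝ) = 1 := by
      rw [he]
      simp [EuclideanSpace.inner_single_right, EuclideanSpace.single_apply]
    have hpe : (inner ℝ (p - x) e : ℝ) = (p - x) i := by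
      rw [he]
      simp [EuclideanSpace.inner_single_right]
    rw [h1, ← ContinuousLinearMap.flip_apply, ← h2, hval]
    simp only [ContinuousLinearMap.add_apply, ContinuousLinearMap.smul_apply,
      innerSL_apply_apply, smul_eq_mul, nsmul_eq_mul, Nat.cast_ofNat]
    rw [hee, hpe]
    ring
  -- sum of squares
  have hsumsq : ∀ v : EuclideanSpace ℝ (Fin n), ∑ i, (v i)^2 = ‖v‖^2 := fun v => by
    have h : ‖v‖^2 = ∑ i, ‖v i‖^2 := by
      rw [EuclideanSpace.norm_eq, Real.sq_sqrt (by positivity)]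
    rw [h]
    exact Finset.sum_congr rfl fun i _ => by rw [Real.norm_eq_abs, sq_abs]
  have hlap : ∀ p, laplacian φ p
      = 2*n*deriv (cutoffG c) (‖p - x‖^2)
        + 4*(‖p - x‖^2)*deriv (deriv (cutoffG c)) (‖p - x‖^2) := by
    intro p
    unfold laplacian
    rw [Finset.sum_congr rfl (fun i _ => hsecond p i), Finset.sum_add_distrib,
      Finset.sum_const, ← Finset.mul_sum, hsumsq (p - x)]
    simp [Finset.card_univ]
    ring
  -- laplacian in closed form
  have hkey : ∀ p : EuclideanSpace ℝ (Fin n), laplacian φ p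
      = -(c^2 * Real.cos (c * ‖p - x‖))
        + ((n:ℝ)-1)*(2*deriv (cutoffG c) (‖p - x‖^2)) := by
    intro p
    have hstar := cutoffG_deriv2_id c ‖p - x‖
    rw [hlap p]
    linear_combination hstar
  have hn1 : (1:ℝ) ≤ (n:ℝ) := by exact_mod_cast hn
  refine ⟨hφC2.contDiffOn, ?_, ?_, ?_, ?_, ?_, ?_⟩
  · intro p hp
    rw [Metric.mem_ball, dist_eq_norm] at hp
    have ht0 : (0:ℝ) ≤ ‖p - x‖ := norm_nonneg _
    have hctlt : c * ‖p - x‖ < π/2 := by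
      calc c * ‖p - x‖ < c * r := mul_lt_mul_of_pos_left hp hc
      _ = π/2 := hcr
    rw [hφval p]
    constructor
    · exact Real.cos_pos_of_mem_Ioo ⟨by nlinarith, hctlt⟩
    · exact Real.cos_le_one _
  · rw [hφval x]
    simp
  · intro p hp
    rw [frontier_ball x hr.ne'] at hp
    rw [mem_sphere_iff_norm] at hp
    rw [hφval p, hp, hcr]
    exact Real.cos_pi_div_two
  · intro p hp
    rw [Metric.mem_ball, dist_eq_norm] at hp
    have ht0 : (0:ℝ) ≤ ‖p - x‖ := norm_nonneg _
    rw [hnorm p]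
    have h1 : |2 * deriv (cutoffG c) (‖p - x‖^2)| * ‖p - x‖
        = |Real.sin (c*‖p - x‖) * c| := by
      rw [show |2 * deriv (cutoffG c) (‖p - x‖^2)| * ‖p - x‖
          = |2 * deriv (cutoffG c) (‖p - x‖^2) * ‖p - x‖| by
        rw [abs_mul (2 * deriv (cutoffG c) (‖p - x‖^2)) ‖p - x‖, abs_of_nonneg ht0]]
      rw [show 2 * deriv (cutoffG c) (‖p - x‖^2) * ‖p - x‖
          = deriv (cutoffG c) (‖p - x‖^2) * (2*‖p - x‖) by ring]
      rw [cutoffG_deriv_id c ‖p - x‖, abs_neg]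
    rw [h1, abs_mul, abs_of_pos hc, ← hcdef]
    have hsb := abs_le.mpr ⟨Real.neg_one_le_sin (c*‖p - x‖), Real.sin_le_one (c*‖p - x‖)⟩
    nlinarith
  · intro p hp
    rw [Metric.mem_ball, dist_eq_norm] at hp
    have ht0 : (0:ℝ) ≤ ‖p - x‖ := norm_nonneg _
    have hctlt : c * ‖p - x‖ < π/2 := by
      calc c * ‖p - x‖ < c * r := mul_lt_mul_of_pos_left hp hc
      _ = π/2 := hcr
    have hctpi : c * ‖p - x‖ ≤ π := by linarith
    have hBd := cutoffG_deriv_bounds hc ht0 hctpi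
    have hcos0 : 0 ≤ Real.cos (c*‖p - x‖) :=
      Real.cos_nonneg_of_mem_Icc ⟨by nlinarith, by linarith⟩
    have hcos1 : Real.cos (c*‖p - x‖) ≤ 1 := Real.cos_le_one _
    rw [hkey p]
    have hr2 : π^2*(n:ℝ)/(4*r^2) = (n:ℝ)*c^2 := by rw [hc2]; ring
    rw [hr2]
    have e3 : c^2*Real.cos (c*‖p - x‖) ≤ c^2 := by nlinarith [sq_nonneg c]
    have e4 : ((n:ℝ)-1)*(-(2*deriv (cutoffG c) (‖p - x‖^2)))
        ≤ ((n:ℝ)-1)*c^2 :=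
      mul_le_mul_of_nonneg_left (by linarith [hBd.1]) (by linarith)
    linarith
  · intro p hp
    rw [Metric.mem_ball, dist_eq_norm] at hp
    have ht0 : (0:ℝ) ≤ ‖p - x‖ := norm_nonneg _
    have hctlt : c * ‖p - x‖ < π/2 := by
      calc c * ‖p - x‖ < c * r := mul_lt_mul_of_pos_left hp hc
      _ = π/2 := hcr
    have hctpi : c * ‖p - x‖ ≤ π := by linarith
    have hBd := cutoffG_deriv_bounds hc ht0 hctpi
    have hcos0 : 0 ≤ Real.cos (c*‖p - x‖) :=
      Real.cos_nonneg_of_mem_Icc ⟨by nlinarith, by linarith⟩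
    have hcos1 : Real.cos (c*‖p - x‖) ≤ 1 := Real.cos_le_one _
    have hsq : ‖fderiv ℝ φ p‖^2 = (Real.sin (c*‖p - x‖) * c)^2 := by
      rw [hnorm p, mul_pow, sq_abs]
      linear_combination (2 * deriv (cutoffG c) (‖p - x‖^2) * ‖p - x‖
        - Real.sin (c*‖p - x‖)*c) * (cutoffG_deriv_id c ‖p - x‖)
    have hpyth := Real.sin_sq_add_cos_sq (c*‖p - x‖)
    have esin : (Real.sin (c*‖p - x‖))^2 ≤ 1 := by
      nlinarith [sq_nonneg (Real.cos (c*‖p - x‖))]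
    have ecos : (Real.cos (c*‖p - x‖))^2 ≤ 1 := by
      nlinarith [sq_nonneg (Real.sin (c*‖p - x‖))]
    have hr3 : π^2*((n:ℝ)+3)/(4*r^2) = ((n:ℝ)+3)*c^2 := by rw [hc2]; ring
    rw [hsq, hφval p, hkey p, hr3]
    have e4 : ((n:ℝ)-1)*((-(2*deriv (cutoffG c) (‖p - x‖^2)))*Real.cos (c*‖p - x‖))
        ≤ ((n:ℝ)-1)*(c^2*1) :=
      mul_le_mul_of_nonneg_left
        (mul_le_mul (by linarith [hBd.1]) hcos1 hcos0 (by positivity))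
        (by linarith)
    nlinarith [e4, esin, ecos, sq_nonneg c, hBd.1, hBd.2]
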